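/- Let d ≥ 1, K_4 > 0, h ∈ (0,1], and δ, κ > 0 with 3κ + δ < 1/2. Let φ : ℝ^d → ℝ be a C³ function with ∑_{|α|_1 ≤ 3} sup_{y ∈ ℝ^d} |D^α φ(y)| ≤ K_4 h^{−δ}, and let F : ℝ^d × S^d → ℝ be any function. Then there is a constant C depending only on d such that for every x ∈ ℝ^d, sup_{(p,Γ) ∈ D_{h,δ}} inf_{w ∈ X_{h,κ}} [ φ(x + √h w) − √h wᵀp − (h/2) wᵀΓw − h F(p,Γ) ] ≥ φ(x) − h F(Dφ(x), D²φ(x)) − C K_4 h^{3/2 − 3κ − δ}. -/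

import Mathlib

noncomputable section

/-- Euclidean space `ℝ^d`. -/
abbrev Ed (d : ℕ) := EuclideanSpace ℝ (Fin d)

/-- The `ℓ²`-operator norm of a matrix. -/
def opN {d : ℕ} (Γ : Matrix (Fin d) (Fin d) ℝ) : ℝ :=
  ‖Matrix.toEuclideanCLM (𝕜 := ℝ) Γ‖

/-- Euclidean inner product `pᵀ w`. -/
def dotp {d : ℕ} (p w : Ed d) : ℝ := ∑ i, p i * w i

/-- Quadratic form `wᵀ Γ w`. -/
def quadForm {d : ℕ} (Γ : Matrix (Fin d) (Fin d) ℝ) (w : Ed d) : ℝ :=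
  ∑ i, ∑ j, w i * Γ i j * w j

/-- The Hessian matrix `D²φ(x)`. -/
def hess {d : ℕ} (φ : Ed d → ℝ) (x : Ed d) : Matrix (Fin d) (Fin d) ℝ :=
  Matrix.of fun i j =>
    iteratedFDeriv ℝ 2 φ x ![EuclideanSpace.single i 1, EuclideanSpace.single j 1]

/-- First-order partial derivative in direction `i`. -/
def pDeriv {d : ℕ} (i : Fin d) (φ : Ed d → ℝ) : Ed d → ℝ :=
  fun x => fderiv ℝ φ x (EuclideanSpace.single i 1)

/-- The multiindex partial derivative `D^α φ`. -/
def mDeriv {d : ℕ} (α : Fin d → ℕ) (φ : Ed d → ℝ) : Ed d → ℝ :=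
  (((List.finRange d).flatMap fun i => List.replicate (α i) i).foldr pDeriv φ)

/-- The finite set of multiindices `α` with `|α|₁ ≤ k`. -/
def multiIdx (d k : ℕ) : Finset (Fin d → ℕ) :=
  (Fintype.piFinset fun _ : Fin d => Finset.range (k + 1)).filter fun α => ∑ i, α i ≤ k

/-- `D_{h,δ} = {(p,Γ) ∈ ℝ^d × S^d : |p| ≤ K₄ h^{-δ}, ‖Γ‖ ≤ K₄ h^{-δ}}`. -/
def Dset (d : ℕ) (K4 h δ : ℝ) : Set (Ed d × Matrix (Fin d) (Fin d) ℝ) :=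
  {pΓ | pΓ.2.IsSymm ∧ ‖pΓ.1‖ ≤ K4 * h ^ (-δ) ∧ opN pΓ.2 ≤ K4 * h ^ (-δ)}

/-- `X_{h,κ} = {w ∈ ℝ^d : |w| ≤ h^{-κ}}`. -/
def Xset (d : ℕ) (h κ : ℝ) : Set (Ed d) := {w | ‖w‖ ≤ h ^ (-κ)}

end


section stmt13helpers

open List Set

variable {d : ℕ}

local notation "eV" i => EuclideanSpace.single i (1:ℝ)

/- ## List / multiindex lemmas -/

lemma flatMap_count_eq (l : List (Fin d)) (hl : l.Pairwise (· ≤ ·)) :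
    ((List.finRange d).flatMap fun i => List.replicate (l.count i) i) = l := by
  apply (fun p s => List.Perm.eq_of_pairwise' s hl p) ?_ ?_
  · rw [List.perm_iff_count]
    intro x
    rw [List.count_flatMap]
    have : ((List.finRange d).map (List.count x ∘ fun i => List.replicate (l.count i) i)).sum
        = ∑ i : Fin d, (if i = x then l.count i else 0) := by
      rw [Fin.sum_univ_def]
      congr 1
      apply List.map_congr_left
      intro i _
      rw [Function.comp_apply, List.count_replicate]
      simp only [beq_iff_eq]
    rw [this, Finset.sum_ite_eq']
    simp
  · rw [List.pairwise_flatMap]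
    constructor
    · intro a _
      exact List.pairwise_replicate.2 (Or.inr le_rfl)
    · apply (List.pairwise_lt_finRange d).imp_of_mem
      intro a b _ _ hab x hx y hy
      rw [List.eq_of_mem_replicate hx, List.eq_of_mem_replicate hy]
      exact hab.le

lemma mDeriv_sorted (l : List (Fin d)) (hl : l.Pairwise (· ≤ ·)) (φ : Ed d → ℝ) :
    mDeriv (fun i => l.count i) φ = l.foldr pDeriv φ := by
  rw [mDeriv, flatMap_count_eq l hl]

lemma sum_count_eq (l : List (Fin d)) : ∑ i : Fin d, l.count i = l.length := by
  induction l with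
  | nil => simp
  | cons a l ih =>
    simp only [List.count_cons, List.length_cons, Finset.sum_add_distrib, ih]
    congr 1
    simp [Finset.sum_ite_eq]

lemma count_mem_multiIdx (l : List (Fin d)) (hlen : l.length ≤ 3) :
    (fun i => l.count i) ∈ multiIdx d 3 := by
  simp only [multiIdx, Finset.mem_filter, Fintype.mem_piFinset, Finset.mem_range]
  constructor
  · intro i; have := List.count_le_length (l := l) (a := i); omega
  · rw [sum_count_eq]; exact hlen

def scnt (i : Fin d) : Fin d → ℕ := fun t => if t = i then 1 else 0

def pcnt (i j : Fin d) : Fin d → ℕ :=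
  fun t => (if t = i then 1 else 0) + (if t = j then 1 else 0)

def tcnt (i j k : Fin d) : Fin d → ℕ :=
  fun t => (if t = i then 1 else 0) + (if t = j then 1 else 0) + (if t = k then 1 else 0)

lemma ite_swap (a b : Fin d) : (if a = b then (1:ℕ) else 0) = if b = a then 1 else 0 := by
  by_cases h : a = b
  · simp [h]
  · simp [h, Ne.symm h]

lemma count_single_eq (i : Fin d) : (fun t => List.count t [i]) = scnt i := by
  funext t
  simp only [scnt, List.count_cons, List.count_nil, beq_iff_eq, Nat.zero_add]
  rw [ite_swap i t]

lemma count_pair_eq (i j : Fin d) : (fun t => List.count t [i, j]) = pcnt i j := by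
  funext t
  simp only [pcnt, List.count_cons, List.count_nil, beq_iff_eq, Nat.zero_add]
  rw [ite_swap i t, ite_swap j t]
  ring

lemma count_triple_eq (i j k : Fin d) : (fun t => List.count t [i, j, k]) = tcnt i j k := by
  funext t
  simp only [tcnt, List.count_cons, List.count_nil, beq_iff_eq, Nat.zero_add]
  rw [ite_swap i t, ite_swap j t, ite_swap k t]
  ring

lemma scnt_mem (i : Fin d) : scnt i ∈ multiIdx d 3 := by
  rw [← count_single_eq]
  exact count_mem_multiIdx [i] (by simp)

lemma pcnt_mem (i j : Fin d) : pcnt i j ∈ multiIdx d 3 := by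
  rw [← count_pair_eq]
  exact count_mem_multiIdx [i, j] (by simp)

lemma tcnt_mem (i j k : Fin d) : tcnt i j k ∈ multiIdx d 3 := by
  rw [← count_triple_eq]
  exact count_mem_multiIdx [i, j, k] (by simp)

lemma pcnt_comm (i j : Fin d) : pcnt i j = pcnt j i := by
  funext t; simp only [pcnt]; ring

lemma scnt_inj (i i' : Fin d) (h : scnt i = scnt i') : i = i' := by
  by_contra hne
  have h0 := congrFun h i
  simp only [scnt] at h0
  rw [if_neg hne] at h0
  simp at h0

lemma pcnt_inj (i j j' : Fin d) (h : pcnt i j = pcnt i j') : j = j' := by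
  by_contra hne
  have h1 := congrFun h j
  have h2 := congrFun h j'
  simp only [pcnt] at h1 h2
  by_cases hji : j = i <;> by_cases hj'i : j' = i <;>
    simp [hji, hj'i, hne, Ne.symm hne, if_pos rfl] at h1 h2 <;> omega

/- ## Smoothness and symmetry of partial derivatives -/

lemma contDiff_pDeriv {ψ : Ed d → ℝ} {n : ℕ} (hψ : ContDiff ℝ (n+1) ψ) (i : Fin d) :
    ContDiff ℝ n (pDeriv i ψ) := by
  have : pDeriv i ψ = fun x =>
      (ContinuousLinearMap.apply ℝ ℝ (eV i)) (fderiv ℝ ψ x) := rfl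
  rw [this]
  exact (ContinuousLinearMap.apply ℝ ℝ _).contDiff.comp
    (hψ.fderiv_right (m := n) (by norm_cast))

lemma pD2_eq {ψ : Ed d → ℝ} (hψ : ContDiff ℝ 2 ψ) (i j : Fin d) (y : Ed d) :
    pDeriv i (pDeriv j ψ) y = fderiv ℝ (fderiv ℝ ψ) y (eV i) (eV j) := by
  have hdiff : DifferentiableAt ℝ (fderiv ℝ ψ) y :=
    ((hψ.fderiv_right (m := 1) (by norm_num)).differentiable (by norm_num)) y
  have : pDeriv i (pDeriv j ψ) y
      = fderiv ℝ (fun z => fderiv ℝ ψ z (eV j)) y (eV i) := rfl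
  rw [this, fderiv_clm_apply hdiff (differentiableAt_const _)]
  simp

lemma pDeriv_comm {ψ : Ed d → ℝ} (hψ : ContDiff ℝ 2 ψ) (i j : Fin d) (y : Ed d) :
    pDeriv i (pDeriv j ψ) y = pDeriv j (pDeriv i ψ) y := by
  rw [pD2_eq hψ, pD2_eq hψ]
  exact second_derivative_symmetric
    (f := ψ) (f' := fderiv ℝ ψ)
    (fun z => ((hψ.differentiable (by norm_num)) z).hasFDerivAt)
    (((hψ.fderiv_right (m := 1) (by norm_num)).differentiable (by norm_num)) y).hasFDerivAt _ _

lemma pD3_eq {ψ : Ed d → ℝ} (hψ : ContDiff ℝ 3 ψ) (i j k : Fin d) (y : Ed d) :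
    pDeriv i (pDeriv j (pDeriv k ψ)) y
      = fderiv ℝ (fderiv ℝ (fderiv ℝ ψ)) y (eV i) (eV j) (eV k) := by
  have hψ1 : ContDiff ℝ 2 (fderiv ℝ ψ) := hψ.fderiv_right (by norm_num)
  have hdiff2 : Differentiable ℝ (fderiv ℝ (fderiv ℝ ψ)) :=
    (hψ1.fderiv_right (m := 1) (by norm_num)).differentiable (by norm_num)
  have h1 : pDeriv j (pDeriv k ψ) = fun z => fderiv ℝ (fderiv ℝ ψ) z (eV j) (eV k) := by
    funext z
    exact pD2_eq (hψ.of_le (by norm_num)) j k z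
  rw [h1]
  have hc : DifferentiableAt ℝ (fun z => fderiv ℝ (fderiv ℝ ψ) z (eV j)) y := by
    have : (fun z => fderiv ℝ (fderiv ℝ ψ) z (eV j))
        = fun z => (ContinuousLinearMap.apply ℝ (Ed d →L[ℝ] ℝ) (eV j))
            (fderiv ℝ (fderiv ℝ ψ) z) := rfl
    rw [this]
    exact ((ContinuousLinearMap.apply ℝ (Ed d →L[ℝ] ℝ) (eV j)).differentiable.comp hdiff2) y
  have : pDeriv i (fun z => fderiv ℝ (fderiv ℝ ψ) z (eV j) (eV k)) y
      = fderiv ℝ (fun z => (fun z' => fderiv ℝ (fderiv ℝ ψ) z' (eV j)) z (eV k)) y (eV i) := rfl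
  rw [this, fderiv_clm_apply hc (differentiableAt_const _)]
  have h2 : fderiv ℝ (fun z => fderiv ℝ (fderiv ℝ ψ) z (eV j)) y
      = (fderiv ℝ (fderiv ℝ (fderiv ℝ ψ)) y).flip (eV j) := by
    have : (fun z => fderiv ℝ (fderiv ℝ ψ) z (eV j))
        = fun z => (fderiv ℝ (fderiv ℝ ψ) z) ((fun _ => (eV j)) z) := rfl
    rw [this, fderiv_clm_apply (hdiff2 y) (differentiableAt_const _)]
    simp
  rw [h2]
  simp

/- ## One-dimensional cubic Taylor bound -/

lemma aux_anti {η η' : ℝ → ℝ} (hd : ∀ t, HasDerivAt η (η' t) t)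
    (hle : ∀ t ∈ Icc (0:ℝ) 1, η' t ≤ 0) : ∀ t ∈ Icc (0:ℝ) 1, η t ≤ η 0 := by
  have hanti : AntitoneOn η (Icc 0 1) := by
    apply antitoneOn_of_deriv_nonpos (convex_Icc 0 1)
    · intro t _
      exact (hd t).continuousAt.continuousWithinAt
    · intro t _
      exact (hd t).differentiableAt.differentiableWithinAt
    · intro t ht
      rw [interior_Icc] at ht
      rw [(hd t).deriv]
      exact hle t ⟨ht.1.le, ht.2.le⟩
  intro t ht
  exact hanti ⟨le_rfl, zero_le_one⟩ ht ht.1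

lemma one_sided_taylor {g g1 g2 g3 : ℝ → ℝ} {B : ℝ}
    (h1 : ∀ t, HasDerivAt g (g1 t) t) (h2 : ∀ t, HasDerivAt g1 (g2 t) t)
    (h3 : ∀ t, HasDerivAt g2 (g3 t) t) (hB : ∀ t ∈ Icc (0:ℝ) 1, g3 t ≤ B)
    (hB0 : 0 ≤ B) :
    g 1 - g 0 - g1 0 - g2 0 / 2 ≤ B := by
  set η2 : ℝ → ℝ := fun t => g2 t - g2 0 - B * t with hη2
  set η1 : ℝ → ℝ := fun t => g1 t - g1 0 - g2 0 * t - B * t ^ 2 / 2 with hη1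
  set η0 : ℝ → ℝ := fun t => g t - g 0 - g1 0 * t - g2 0 * t ^ 2 / 2 - B * t ^ 3 / 6 with hη0
  have hd2 : ∀ t, HasDerivAt η2 (g3 t - B) t := by
    intro t
    have := ((h3 t).sub_const (g2 0)).sub ((hasDerivAt_id t).const_mul B)
    exact this.congr_deriv (by ring)
  have hd1 : ∀ t, HasDerivAt η1 (η2 t) t := by
    intro t
    have h' : HasDerivAt (fun t : ℝ => B * t ^ 2 / 2) (B * t) t := by
      have := (((hasDerivAt_pow 2 t).const_mul B).div_const 2)
      exact this.congr_deriv (by push_cast; ring)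
    have := (((h2 t).sub_const (g1 0)).sub ((hasDerivAt_id t).const_mul (g2 0))).sub h'
    have h'' : g2 t - g2 0 * 1 - B * t = η2 t := by simp [hη2]; try ring
    exact this.congr_deriv h''
  have hd0 : ∀ t, HasDerivAt η0 (η1 t) t := by
    intro t
    have ha : HasDerivAt (fun t : ℝ => g2 0 * t ^ 2 / 2) (g2 0 * t) t := by
      have := (((hasDerivAt_pow 2 t).const_mul (g2 0)).div_const 2)
      exact this.congr_deriv (by push_cast; ring)
    have hb : HasDerivAt (fun t : ℝ => B * t ^ 3 / 6) (B * t ^ 2 / 2) t := by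
      have := (((hasDerivAt_pow 3 t).const_mul B).div_const 6)
      exact this.congr_deriv (by push_cast; ring)
    have := ((((h1 t).sub_const (g 0)).sub ((hasDerivAt_id t).const_mul (g1 0))).sub ha).sub hb
    have h'' : g1 t - g1 0 * 1 - g2 0 * t - B * t ^ 2 / 2 = η1 t := by simp [hη1]; try ring
    exact this.congr_deriv h''
  have s2 : ∀ t ∈ Icc (0:ℝ) 1, η2 t ≤ 0 := by
    have := aux_anti hd2 (fun t ht => by linarith [hB t ht])
    intro t ht
    have h0 : η2 0 = 0 := by simp [hη2]
    linarith [this t ht]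
  have s1 : ∀ t ∈ Icc (0:ℝ) 1, η1 t ≤ 0 := by
    have := aux_anti hd1 s2
    intro t ht
    have h0 : η1 0 = 0 := by simp [hη1]
    linarith [this t ht]
  have s0 : η0 1 ≤ 0 := by
    have := aux_anti hd0 s1 1 ⟨zero_le_one, le_rfl⟩
    have h0 : η0 0 = 0 := by simp [hη0]
    linarith
  have : η0 1 = g 1 - g 0 - g1 0 - g2 0 / 2 - B / 6 := by simp [hη0]; try ring
  rw [this] at s0
  linarith

lemma taylor2_bound {g g1 g2 g3 : ℝ → ℝ} {B : ℝ}
    (h1 : ∀ t, HasDerivAt g (g1 t) t) (h2 : ∀ t, HasDerivAt g1 (g2 t) t)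
    (h3 : ∀ t, HasDerivAt g2 (g3 t) t) (hB : ∀ t ∈ Icc (0:ℝ) 1, |g3 t| ≤ B) :
    |g 1 - g 0 - g1 0 - g2 0 / 2| ≤ B := by
  have hB0 : 0 ≤ B := le_trans (abs_nonneg _) (hB 0 ⟨le_rfl, zero_le_one⟩)
  rw [abs_le]
  constructor
  · have := one_sided_taylor (g := fun t => -g t) (g1 := fun t => -g1 t) (g2 := fun t => -g2 t)
      (g3 := fun t => -g3 t) (fun t => (h1 t).neg) (fun t => (h2 t).neg) (fun t => (h3 t).neg)
      (fun t ht => by have h := abs_le.1 (hB t ht); show -g3 t ≤ B; linarith [h.1]) hB0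
    simp only [neg_sub_neg] at this
    linarith
  · exact one_sided_taylor h1 h2 h3 (fun t ht => (abs_le.1 (hB t ht)).2) hB0

/- ## Basis expansion for continuous (multi)linear maps -/

lemma euclid_decomp (v : Ed d) : v = ∑ i, v i • (EuclideanSpace.single i (1:ℝ)) := by
  ext j
  rw [show (∑ i, v i • (EuclideanSpace.single i (1:ℝ))) j
      = ∑ i, (v i • (EuclideanSpace.single i (1:ℝ))) j from by
    simp [Pi.single_apply]]
  simp [EuclideanSpace.single_apply]

lemma clm_expand1 {G : Type*} [NormedAddCommGroup G] [NormedSpace ℝ G]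
    (T : Ed d →L[ℝ] G) (v : Ed d) : T v = ∑ i, v i • T (EuclideanSpace.single i (1:ℝ)) := by
  conv_lhs => rw [euclid_decomp v]
  rw [map_sum]
  simp

lemma clm_expand3 (T : Ed d →L[ℝ] Ed d →L[ℝ] Ed d →L[ℝ] ℝ) (v : Ed d) :
    T v v v = ∑ i, ∑ j, ∑ k, v i * v j * v k *
      T (EuclideanSpace.single i (1:ℝ)) (EuclideanSpace.single j (1:ℝ))
        (EuclideanSpace.single k (1:ℝ)) := by
  have h := euclid_decomp v
  conv_lhs => rw [h]
  simp only [map_sum, Finset.sum_apply, ContinuousLinearMap.sum_apply, map_smul,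
    ContinuousLinearMap.smul_apply, smul_eq_mul]
  simp_rw [Finset.mul_sum]
  have key : ∀ (A : Fin d → Fin d → Fin d → ℝ),
      (∑ i, ∑ j, ∑ k, A i j k) = ∑ i, ∑ j, ∑ k, A k j i := by
    intro A
    let e : (Fin d × Fin d × Fin d) ≃ (Fin d × Fin d × Fin d) :=
      ⟨fun p => (p.2.2, p.2.1, p.1), fun p => (p.2.2, p.2.1, p.1), fun p => rfl, fun p => rfl⟩
    calc (∑ i, ∑ j, ∑ k, A i j k) = ∑ p : Fin d × Fin d × Fin d, A p.1 p.2.1 p.2.2 := by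
          rw [Fintype.sum_prod_type]; simp_rw [Fintype.sum_prod_type]
      _ = ∑ p : Fin d × Fin d × Fin d, A p.2.2 p.2.1 p.1 :=
          Fintype.sum_equiv e _ _ (fun p => rfl)
      _ = ∑ i, ∑ j, ∑ k, A k j i := by
          rw [Fintype.sum_prod_type]; simp_rw [Fintype.sum_prod_type]
  rw [key]
  refine Finset.sum_congr rfl fun i _ => Finset.sum_congr rfl fun j _ =>
    Finset.sum_congr rfl fun k _ => by ring

lemma clm_expand2 (T : Ed d →L[ℝ] Ed d →L[ℝ] ℝ) (v : Ed d) :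
    T v v = ∑ i, ∑ j, v i * v j *
      T (EuclideanSpace.single i (1:ℝ)) (EuclideanSpace.single j (1:ℝ)) := by
  have h := euclid_decomp v
  conv_lhs => rw [h]
  simp only [map_sum, Finset.sum_apply, ContinuousLinearMap.sum_apply, map_smul,
    ContinuousLinearMap.smul_apply, smul_eq_mul]
  simp_rw [Finset.mul_sum]
  rw [Finset.sum_comm]
  refine Finset.sum_congr rfl fun i _ => Finset.sum_congr rfl fun j _ => by ring

/- ## Derivatives along a line -/

section line
variable {φ : Ed d → ℝ} (x v : Ed d)

lemma hasDerivAt_line (t : ℝ) : HasDerivAt (fun s : ℝ => x + s • v) v t := by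
  have := ((hasDerivAt_id t).smul_const v).const_add x
  simpa using this

lemma line_deriv1 (hφ : ContDiff ℝ 3 φ) (t : ℝ) :
    HasDerivAt (fun s : ℝ => φ (x + s • v)) (fderiv ℝ φ (x + t • v) v) t := by
  have hdφ : Differentiable ℝ φ := hφ.differentiable (by norm_num)
  exact (hdφ (x + t • v)).hasFDerivAt.comp_hasDerivAt t (hasDerivAt_line x v t)

lemma line_deriv2 (hφ : ContDiff ℝ 3 φ) (t : ℝ) :
    HasDerivAt (fun s : ℝ => fderiv ℝ φ (x + s • v) v)
      (fderiv ℝ (fderiv ℝ φ) (x + t • v) v v) t := by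
  have hd1 : Differentiable ℝ (fderiv ℝ φ) :=
    (hφ.fderiv_right (m := 2) (by norm_num)).differentiable (by norm_num)
  have hcomp := ((ContinuousLinearMap.apply ℝ ℝ v).hasFDerivAt.comp (x + t • v)
    (hd1 (x + t • v)).hasFDerivAt).comp_hasDerivAt t (hasDerivAt_line x v t)
  exact hcomp

lemma line_deriv3 (hφ : ContDiff ℝ 3 φ) (t : ℝ) :
    HasDerivAt (fun s : ℝ => fderiv ℝ (fderiv ℝ φ) (x + s • v) v v)
      (fderiv ℝ (fderiv ℝ (fderiv ℝ φ)) (x + t • v) v v v) t := by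
  have hd2 : Differentiable ℝ (fderiv ℝ (fderiv ℝ φ)) :=
    ((hφ.fderiv_right (m := 2) (by norm_num)).fderiv_right (m := 1)
      (by norm_num)).differentiable (by norm_num)
  have hcomp := (((ContinuousLinearMap.apply ℝ ℝ v).comp
      (ContinuousLinearMap.apply ℝ (Ed d →L[ℝ] ℝ) v)).hasFDerivAt.comp (x + t • v)
    (f := fderiv ℝ (fderiv ℝ φ)) (hd2 (x + t • v)).hasFDerivAt).comp_hasDerivAt t (hasDerivAt_line x v t)
  exact hcomp

end line

/- ## Bounds on partial derivatives via the multiindex bounds -/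

section bounds
variable {φ : Ed d → ℝ} {M : (Fin d → ℕ) → ℝ}

lemma M_nonneg (hM : ∀ α ∈ multiIdx d 3, ∀ y : Ed d, |mDeriv α φ y| ≤ M α)
    {α : Fin d → ℕ} (hα : α ∈ multiIdx d 3) : 0 ≤ M α :=
  le_trans (abs_nonneg _) (hM α hα 0)

lemma abs_pD1_le (hM : ∀ α ∈ multiIdx d 3, ∀ y : Ed d, |mDeriv α φ y| ≤ M α)
    (i : Fin d) (y : Ed d) : |pDeriv i φ y| ≤ M (scnt i) := by
  have h1 : mDeriv (scnt i) φ = pDeriv i φ := by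
    rw [← count_single_eq, mDeriv_sorted [i] (by simp) φ]
    rfl
  rw [← h1]
  exact hM _ (scnt_mem i) y

lemma abs_pD2_le (hφ : ContDiff ℝ 3 φ)
    (hM : ∀ α ∈ multiIdx d 3, ∀ y : Ed d, |mDeriv α φ y| ≤ M α)
    (i j : Fin d) (y : Ed d) : |pDeriv i (pDeriv j φ) y| ≤ M (pcnt i j) := by
  have sorted : ∀ a b : Fin d, a ≤ b → ∀ z : Ed d,
      |pDeriv a (pDeriv b φ) z| ≤ M (pcnt a b) := by
    intro a b hab z
    have h1 : mDeriv (pcnt a b) φ = pDeriv a (pDeriv b φ) := by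
      rw [← count_pair_eq, mDeriv_sorted [a, b] (by simp [hab]) φ]
      rfl
    rw [← h1]
    exact hM _ (pcnt_mem a b) z
  rcases le_total i j with hle | hle
  · exact sorted i j hle y
  · rw [pDeriv_comm (hφ.of_le (by norm_num)) i j y, pcnt_comm]
    exact sorted j i hle y

lemma abs_pD3_le (hφ : ContDiff ℝ 3 φ)
    (hM : ∀ α ∈ multiIdx d 3, ∀ y : Ed d, |mDeriv α φ y| ≤ M α)
    (i j k : Fin d) (y : Ed d) :
    |pDeriv i (pDeriv j (pDeriv k φ)) y| ≤ M (tcnt i j k) := by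
  have hφ2 : ContDiff ℝ 2 φ := hφ.of_le (by norm_num)
  have hpk : ∀ c : Fin d, ContDiff ℝ 2 (pDeriv c φ) := fun c =>
    contDiff_pDeriv (n := 2) (by exact_mod_cast hφ) c
  have sorted : ∀ a b c : Fin d, a ≤ b → b ≤ c → ∀ z : Ed d,
      |pDeriv a (pDeriv b (pDeriv c φ)) z| ≤ M (tcnt a b c) := by
    intro a b c hab hbc z
    have h1 : mDeriv (tcnt a b c) φ = pDeriv a (pDeriv b (pDeriv c φ)) := by
      rw [← count_triple_eq, mDeriv_sorted [a, b, c] (by simp [hab, hbc, le_trans hab hbc]) φ]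
      rfl
    rw [← h1]
    exact hM _ (tcnt_mem a b c) z
  have sw12 : ∀ a b c : Fin d, ∀ z : Ed d,
      pDeriv a (pDeriv b (pDeriv c φ)) z = pDeriv b (pDeriv a (pDeriv c φ)) z :=
    fun a b c z => pDeriv_comm (hpk c) a b z
  have sw23 : ∀ a b c : Fin d, ∀ z : Ed d,
      pDeriv a (pDeriv b (pDeriv c φ)) z = pDeriv a (pDeriv c (pDeriv b φ)) z := by
    intro a b c z
    rw [show pDeriv b (pDeriv c φ) = pDeriv c (pDeriv b φ) from
      funext fun u => pDeriv_comm hφ2 b c u]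
  have t12 : ∀ a b c : Fin d, tcnt a b c = tcnt b a c := by
    intro a b c; funext t; simp only [tcnt]; ring
  have t23 : ∀ a b c : Fin d, tcnt a b c = tcnt a c b := by
    intro a b c; funext t; simp only [tcnt]; ring
  rcases le_total j k with hjk | hjk
  · rcases le_total i j with hij | hij
    · exact sorted i j k hij hjk y
    · rcases le_total i k with hik | hik
      · rw [sw12 i j k y, t12]
        exact sorted j i k hij hik y
      · rw [sw12 i j k y, sw23 j i k y, t12, t23]
        exact sorted j k i hjk hik y
  · rcases le_total i k with hik | hik
    · rw [sw23 i j k y, t23]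
      exact sorted i k j hik hjk y
    · rcases le_total i j with hij | hij
      · rw [sw23 i j k y, sw12 i k j y, t23, t12]
        exact sorted k i j hik hij y
      · rw [sw23 i j k y, sw12 i k j y, sw23 k i j y, t23, t12, t23 k i j]
        exact sorted k j i hjk hij y

end bounds

lemma coord_le_norm (v : Ed d) (i : Fin d) : |v i| ≤ ‖v‖ := by
  rw [EuclideanSpace.norm_eq, ← Real.sqrt_sq_eq_abs]
  apply Real.sqrt_le_sqrt
  have : (v i) ^ 2 = ‖v i‖ ^ 2 := by rw [Real.norm_eq_abs, sq_abs]
  rw [this]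
  exact Finset.single_le_sum (f := fun j => ‖v j‖ ^ 2)
    (fun j _ => sq_nonneg _) (Finset.mem_univ i)

end stmt13helpers
/-- One-sided consistency bound: the max–min quantity dominates
`φ(x) - hF(Dφ(x), D²φ(x)) - C K₄ h^{3/2 - 3κ - δ}` for an arbitrary `F`, with a
constant `C` depending only on `d` (stated in the extended reals so that the
supremum–infimum is always well defined). -/
theorem stmt13 (d : ℕ) (hd : 1 ≤ d) :
    ∃ C > (0 : ℝ), ∀ K4 : ℝ, 0 < K4 → ∀ h ∈ Set.Ioc (0 : ℝ) 1, ∀ δ κ : ℝ,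
      0 < δ → 0 < κ → 3 * κ + δ < 1 / 2 →
      ∀ φ : Ed d → ℝ, ContDiff ℝ 3 φ →
        (∃ M : (Fin d → ℕ) → ℝ,
          (∀ α ∈ multiIdx d 3, ∀ y : Ed d, |mDeriv α φ y| ≤ M α) ∧
          ∑ α ∈ multiIdx d 3, M α ≤ K4 * h ^ (-δ)) →
      ∀ (F : Ed d → Matrix (Fin d) (Fin d) ℝ → ℝ) (x : Ed d),
        ((φ x - h * F (gradient φ x) (hess φ x)
            - C * K4 * h ^ ((3 : ℝ) / 2 - 3 * κ - δ) : ℝ) : EReal)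
          ≤ ⨆ pΓ ∈ Dset d K4 h δ, ⨅ w ∈ Xset d h κ,
              ((φ (x + Real.sqrt h • w) - Real.sqrt h * dotp w pΓ.1 -
                (h / 2) * quadForm pΓ.2 w - h * F pΓ.1 pΓ.2 : ℝ) : EReal) := by
  classical
  refine ⟨(d : ℝ) ^ 3, by positivity, ?_⟩
  intro K4 hK4 h hh δ κ hδ hκ hsmall φ hφ hMex F x
  obtain ⟨M, hM, hMsum⟩ := hMex
  have hh0 : 0 < h := hh.1
  have hh1 : h ≤ 1 := hh.2
  set S : ℝ := K4 * h ^ (-δ) with hS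
  have hS0 : 0 ≤ S := by
    have : (0:ℝ) < h ^ (-δ) := Real.rpow_pos_of_pos hh0 _
    positivity
  -- abbreviations for derivatives
  set f1 := fderiv ℝ φ with hf1
  set f2 := fderiv ℝ f1 with hf2
  set f3 := fderiv ℝ f2 with hf3
  have hsum_le : ∀ α ∈ multiIdx d 3, M α ≤ S := by
    intro α hα
    calc M α ≤ ∑ β ∈ multiIdx d 3, M β :=
          Finset.single_le_sum (fun β hβ => M_nonneg hM hβ) hα
      _ ≤ S := hMsum
  -- second-order partials and the Hessian
  have hΓ : ∀ i j, hess φ x i j = f2 x (EuclideanSpace.single i (1:ℝ))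
      (EuclideanSpace.single j (1:ℝ)) := by
    intro i j
    show iteratedFDeriv ℝ 2 φ x ![_, _] = _
    rw [iteratedFDeriv_two_apply]
    simp [hf2, hf1]
  have hpd2 : ∀ i j (y : Ed d), pDeriv i (pDeriv j φ) y
      = f2 y (EuclideanSpace.single i (1:ℝ)) (EuclideanSpace.single j (1:ℝ)) :=
    fun i j y => pD2_eq (hφ.of_le (by norm_num)) i j y
  have hΓsym : ∀ i j, hess φ x i j = hess φ x j i := by
    intro i j
    rw [hΓ, hΓ]
    exact second_derivative_symmetric (f := φ) (f' := f1)
      (fun z => ((hφ.differentiable (by norm_num)) z).hasFDerivAt)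
      (((hφ.fderiv_right (m := 1) (by norm_num)).differentiable (by norm_num)) x).hasFDerivAt _ _
  have hΓbound : ∀ i j, |hess φ x i j| ≤ M (pcnt i j) := by
    intro i j
    rw [hΓ, ← hpd2]
    exact abs_pD2_le hφ hM i j x
  -- row sums of the Hessian
  have hrow : ∀ i, ∑ j, |hess φ x i j| ≤ S := by
    intro i
    have hinj : ∀ a ∈ Finset.univ, ∀ b ∈ Finset.univ,
        pcnt i a = pcnt i b → a = b := fun a _ b _ hab => pcnt_inj i a b hab
    calc ∑ j, |hess φ x i j| ≤ ∑ j, M (pcnt i j) :=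
          Finset.sum_le_sum fun j _ => hΓbound i j
      _ = ∑ α ∈ Finset.univ.image (pcnt i), M α := (Finset.sum_image hinj).symm
      _ ≤ ∑ α ∈ multiIdx d 3, M α := by
          apply Finset.sum_le_sum_of_subset_of_nonneg
          · intro α hα
            obtain ⟨j, _, rfl⟩ := Finset.mem_image.1 hα
            exact pcnt_mem i j
          · intro α hα _
            exact M_nonneg hM hα
      _ ≤ S := hMsum
  -- gradient facts
  have hgrad_inner : ∀ u : Ed d, (inner ℝ (gradient φ x) u : ℝ) = f1 x u := by
    intro u
    exact InnerProductSpace.toDual_symm_apply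
  have hdotp : ∀ u : Ed d, dotp u (gradient φ x) = f1 x u := by
    intro u
    rw [← hgrad_inner u, PiLp.inner_apply]
    simp only [RCLike.inner_apply, conj_trivial, dotp]
  have hgradi : ∀ i, gradient φ x i = pDeriv i φ x := by
    intro i
    have := hdotp (EuclideanSpace.single i (1:ℝ))
    rw [dotp] at this
    simp only [EuclideanSpace.single_apply, ite_mul, one_mul, zero_mul] at this
    rw [Finset.sum_ite_eq'] at this
    simpa [pDeriv, hf1] using this
  -- membership of the chosen pair in Dset
  have hgrad_norm : ‖gradient φ x‖ ≤ S := by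
    have h1 : ‖gradient φ x‖ ≤ ∑ i, |gradient φ x i| := by
      calc ‖gradient φ x‖ = ‖∑ i, gradient φ x i • EuclideanSpace.single i (1:ℝ)‖ := by
            rw [← euclid_decomp]
        _ ≤ ∑ i, ‖gradient φ x i • EuclideanSpace.single i (1:ℝ)‖ := norm_sum_le _ _
        _ = ∑ i, |gradient φ x i| := by
            simp [norm_smul, EuclideanSpace.norm_single]
    have h2 : ∑ i, |gradient φ x i| ≤ ∑ i, M (scnt i) := by
      apply Finset.sum_le_sum
      intro i _
      rw [hgradi i]
      exact abs_pD1_le hM i x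
    have h3 : ∑ i, M (scnt i) ≤ S := by
      have hinj : ∀ a ∈ (Finset.univ : Finset (Fin d)), ∀ b ∈ Finset.univ,
          scnt a = scnt b → a = b := fun a _ b _ hab => scnt_inj a b hab
      calc ∑ i, M (scnt i) = ∑ α ∈ Finset.univ.image (fun i : Fin d => scnt i), M α := (Finset.sum_image hinj).symm
        _ ≤ ∑ α ∈ multiIdx d 3, M α := by
            apply Finset.sum_le_sum_of_subset_of_nonneg
            · intro α hα
              obtain ⟨i, _, rfl⟩ := Finset.mem_image.1 hα
              exact scnt_mem i
            · intro α hα _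
              exact M_nonneg hM hα
        _ ≤ S := hMsum
    linarith
  have hop : opN (hess φ x) ≤ S := by
    rw [opN]
    apply ContinuousLinearMap.opNorm_le_bound _ hS0
    intro w
    set T := Matrix.toEuclideanCLM (𝕜 := ℝ) (hess φ x) with hT
    have hTw : ∀ i, (T w) i = ∑ j, hess φ x i j * w j := by
      intro i
      have h0 := Matrix.ofLp_toEuclideanCLM (𝕜 := ℝ) (hess φ x) w
      calc (T w) i = (Matrix.mulVec (hess φ x) (WithLp.ofLp w)) i := by rw [hT, h0]
        _ = ∑ j, hess φ x i j * w j := by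
            simp [Matrix.toLin'_apply, Matrix.mulVec, dotProduct]
    have key : ∑ i, ‖(T w) i‖ ^ 2 ≤ (S * ‖w‖) ^ 2 := by
      have hsq : ∀ i, ‖(T w) i‖ ^ 2 ≤ S * ∑ j, |hess φ x i j| * (w j) ^ 2 := by
        intro i
        rw [hTw i]
        have habs : ‖∑ j, hess φ x i j * w j‖ ≤ ∑ j, |hess φ x i j| * |w j| := by
          calc ‖∑ j, hess φ x i j * w j‖ ≤ ∑ j, ‖hess φ x i j * w j‖ := norm_sum_le _ _
            _ = ∑ j, |hess φ x i j| * |w j| := by simp [abs_mul]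
        have hCS : (∑ j, |hess φ x i j| * |w j|) ^ 2
            ≤ (∑ j, |hess φ x i j|) * (∑ j, |hess φ x i j| * (w j) ^ 2) := by
          have := Finset.sum_mul_sq_le_sq_mul_sq Finset.univ
            (fun j => Real.sqrt |hess φ x i j|)
            (fun j => Real.sqrt |hess φ x i j| * |w j|)
          have e1 : ∀ j : Fin d, Real.sqrt |hess φ x i j| * (Real.sqrt |hess φ x i j| * |w j|)
              = |hess φ x i j| * |w j| := by
            intro j
            rw [← mul_assoc, Real.mul_self_sqrt (abs_nonneg _)]
          have e2 : ∀ j : Fin d, Real.sqrt |hess φ x i j| ^ 2 = |hess φ x i j| := fun j =>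
            Real.sq_sqrt (abs_nonneg _)
          have e3 : ∀ j : Fin d, (Real.sqrt |hess φ x i j| * |w j|) ^ 2
              = |hess φ x i j| * (w j) ^ 2 := by
            intro j
            rw [mul_pow, Real.sq_sqrt (abs_nonneg _), sq_abs]
          simp only [e1, e2, e3] at this
          exact this
        have hrowi := hrow i
        have hterm : (0:ℝ) ≤ ∑ j, |hess φ x i j| * (w j) ^ 2 :=
          Finset.sum_nonneg fun j _ => mul_nonneg (abs_nonneg _) (sq_nonneg _)
        calc ‖∑ j, hess φ x i j * w j‖ ^ 2 ≤ (∑ j, |hess φ x i j| * |w j|) ^ 2 := by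
              apply pow_le_pow_left₀ (norm_nonneg _) habs
          _ ≤ (∑ j, |hess φ x i j|) * (∑ j, |hess φ x i j| * (w j) ^ 2) := hCS
          _ ≤ S * ∑ j, |hess φ x i j| * (w j) ^ 2 := by
              apply mul_le_mul_of_nonneg_right hrowi hterm
      calc ∑ i, ‖(T w) i‖ ^ 2 ≤ ∑ i, S * ∑ j, |hess φ x i j| * (w j) ^ 2 :=
            Finset.sum_le_sum fun i _ => hsq i
        _ = S * ∑ j, (w j) ^ 2 * ∑ i, |hess φ x i j| := by
            rw [← Finset.mul_sum, Finset.sum_comm]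
            congr 1
            refine Finset.sum_congr rfl fun j _ => ?_
            rw [← Finset.sum_mul, mul_comm]
        _ ≤ S * ∑ j, (w j) ^ 2 * S := by
            apply mul_le_mul_of_nonneg_left _ hS0
            apply Finset.sum_le_sum
            intro j _
            apply mul_le_mul_of_nonneg_left _ (sq_nonneg _)
            have : ∑ i, |hess φ x i j| = ∑ i, |hess φ x j i| := by
              refine Finset.sum_congr rfl fun i _ => ?_
              rw [hΓsym]
            rw [this]
            exact hrow j
        _ = (S * ‖w‖) ^ 2 := by
            have : ‖w‖ ^ 2 = ∑ j, (w j) ^ 2 := by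
              rw [EuclideanSpace.norm_eq]
              rw [Real.sq_sqrt (Finset.sum_nonneg fun j _ => sq_nonneg _)]
              simp [sq_abs]
            rw [mul_pow, this, ← Finset.sum_mul]
            ring
    have : ‖T w‖ = Real.sqrt (∑ i, ‖(T w) i‖ ^ 2) := EuclideanSpace.norm_eq _
    rw [this]
    have := Real.sqrt_le_sqrt key
    rwa [Real.sqrt_sq (by positivity)] at this
  have hmem : ((gradient φ x, hess φ x) : Ed d × Matrix (Fin d) (Fin d) ℝ)
      ∈ Dset d K4 h δ := by
    refine ⟨?_, hgrad_norm, hop⟩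
    apply Matrix.ext
    intro i j
    rw [Matrix.transpose_apply]
    exact hΓsym j i
  -- choose the pair (∇φ(x), D²φ(x)) in the supremum
  apply le_iSup₂_of_le (⟨gradient φ x, hess φ x⟩ :
    Ed d × Matrix (Fin d) (Fin d) ℝ) hmem
  refine le_iInf₂ fun w hw => ?_
  show ((φ x - h * F (gradient φ x) (hess φ x)
      - (d:ℝ)^3 * K4 * h ^ ((3 : ℝ) / 2 - 3 * κ - δ) : ℝ) : EReal)
    ≤ ((φ (x + Real.sqrt h • w) - Real.sqrt h * dotp w (gradient φ x) -
        (h / 2) * quadForm (hess φ x) w - h * F (gradient φ x) (hess φ x) : ℝ) : EReal)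
  rw [EReal.coe_le_coe_iff]
  have hw' : ‖w‖ ≤ h ^ (-κ) := hw
  set v : Ed d := Real.sqrt h • w with hv
  have hsqrt0 : (0:ℝ) ≤ Real.sqrt h := Real.sqrt_nonneg h
  -- bound on the third directional derivative
  set B : ℝ := (d:ℝ)^3 * (‖v‖^3 * S) with hB
  have hf3bound : ∀ t ∈ Set.Icc (0:ℝ) 1, |f3 (x + t • v) v v v| ≤ B := by
    intro t _
    rw [clm_expand3]
    have habs : |∑ i, ∑ j, ∑ k, v i * v j * v k *
        f3 (x + t • v) (EuclideanSpace.single i (1:ℝ)) (EuclideanSpace.single j (1:ℝ))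
          (EuclideanSpace.single k (1:ℝ))|
        ≤ ∑ i, ∑ j, ∑ k, |v i * v j * v k *
        f3 (x + t • v) (EuclideanSpace.single i (1:ℝ)) (EuclideanSpace.single j (1:ℝ))
          (EuclideanSpace.single k (1:ℝ))| := by
      refine (Finset.abs_sum_le_sum_abs _ _).trans (Finset.sum_le_sum fun i _ => ?_)
      refine (Finset.abs_sum_le_sum_abs _ _).trans (Finset.sum_le_sum fun j _ => ?_)
      exact Finset.abs_sum_le_sum_abs _ _
    refine habs.trans ?_
    have hterm : ∀ i j k : Fin d, |v i * v j * v k *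
        f3 (x + t • v) (EuclideanSpace.single i (1:ℝ)) (EuclideanSpace.single j (1:ℝ))
          (EuclideanSpace.single k (1:ℝ))| ≤ ‖v‖^3 * S := by
      intro i j k
      have hT : |f3 (x + t • v) (EuclideanSpace.single i (1:ℝ))
          (EuclideanSpace.single j (1:ℝ)) (EuclideanSpace.single k (1:ℝ))| ≤ S := by
        rw [← pD3_eq hφ i j k (x + t • v)]
        exact (abs_pD3_le hφ hM i j k (x + t • v)).trans (hsum_le _ (tcnt_mem i j k))
      calc |v i * v j * v k * f3 (x + t • v) (EuclideanSpace.single i (1:ℝ))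
            (EuclideanSpace.single j (1:ℝ)) (EuclideanSpace.single k (1:ℝ))|
          = |v i| * |v j| * |v k| * |f3 (x + t • v) (EuclideanSpace.single i (1:ℝ))
            (EuclideanSpace.single j (1:ℝ)) (EuclideanSpace.single k (1:ℝ))| := by
            rw [abs_mul, abs_mul, abs_mul]
        _ ≤ ‖v‖ * ‖v‖ * ‖v‖ * S := by
            gcongr
            · exact coord_le_norm v i
            · exact coord_le_norm v j
            · exact coord_le_norm v k
        _ = ‖v‖^3 * S := by ring
    calc (∑ i, ∑ j, ∑ k, |v i * v j * v k *
        f3 (x + t • v) (EuclideanSpace.single i (1:ℝ)) (EuclideanSpace.single j (1:ℝ))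
          (EuclideanSpace.single k (1:ℝ))|)
        ≤ ∑ _i : Fin d, ∑ _j : Fin d, ∑ _k : Fin d, ‖v‖^3 * S := by
          refine Finset.sum_le_sum fun i _ => Finset.sum_le_sum fun j _ =>
            Finset.sum_le_sum fun k _ => hterm i j k
      _ = B := by
          simp only [Finset.sum_const, Finset.card_univ, Fintype.card_fin, nsmul_eq_mul]
          rw [hB]
          ring
  -- Taylor bound
  have hT := taylor2_bound (g := fun t => φ (x + t • v))
    (g1 := fun t => f1 (x + t • v) v) (g2 := fun t => f2 (x + t • v) v v)
    (g3 := fun t => f3 (x + t • v) v v v)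
    (line_deriv1 x v hφ) (line_deriv2 x v hφ) (line_deriv3 x v hφ) hf3bound
  simp only [zero_smul, one_smul, add_zero] at hT
  -- rewrite the linear and quadratic terms
  have hlin : Real.sqrt h * dotp w (gradient φ x) = f1 x v := by
    rw [hdotp w, hv, map_smul]
    simp
  have hquad : quadForm (hess φ x) w = f2 x w w := by
    rw [quadForm, clm_expand2 (f2 x) w]
    refine Finset.sum_congr rfl fun i _ => Finset.sum_congr rfl fun j _ => ?_
    rw [hΓ]
    ring
  have hq2 : f2 x v v = h * f2 x w w := by
    have hA : f2 x v = Real.sqrt h • (f2 x w) := by rw [hv]; exact (f2 x).map_smul _ _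
    have hB2 : ∀ (T : Ed d →L[ℝ] ℝ), T v = Real.sqrt h * T w := by
      intro T
      rw [hv, map_smul]
      rfl
    calc f2 x v v = (Real.sqrt h • f2 x w) v := by rw [hA]
      _ = Real.sqrt h * ((f2 x w) v) := rfl
      _ = Real.sqrt h * (Real.sqrt h * f2 x w w) := by rw [hB2 (f2 x w)]
      _ = h * f2 x w w := by rw [← mul_assoc, Real.mul_self_sqrt hh0.le]
  -- numeric bound on B
  have hnormv : ‖v‖ ≤ Real.sqrt h * h ^ (-κ) := by
    rw [hv, norm_smul]
    simp only [Real.norm_eq_abs, abs_of_nonneg hsqrt0]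
    exact mul_le_mul_of_nonneg_left hw' hsqrt0
  have hBle : B ≤ (d:ℝ)^3 * K4 * h ^ ((3 : ℝ) / 2 - 3 * κ - δ) := by
    have hpow : ‖v‖^3 ≤ (Real.sqrt h * h ^ (-κ))^3 :=
      pow_le_pow_left₀ (norm_nonneg _) hnormv 3
    have hrpos : (0:ℝ) < h ^ (-κ) := Real.rpow_pos_of_pos hh0 _
    have hcalc : (Real.sqrt h * h ^ (-κ))^3 * h ^ (-δ)
        = h ^ ((3 : ℝ) / 2 - 3 * κ - δ) := by
      rw [Real.sqrt_eq_rpow, ← Real.rpow_add hh0,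
        ← Real.rpow_natCast (h ^ ((1:ℝ)/2 + -κ)) 3,
        ← Real.rpow_mul hh0.le, ← Real.rpow_add hh0]
      congr 1
      push_cast
      ring
    calc B = (d:ℝ)^3 * (‖v‖^3 * (K4 * h ^ (-δ))) := by rw [hB, hS]
      _ ≤ (d:ℝ)^3 * ((Real.sqrt h * h ^ (-κ))^3 * (K4 * h ^ (-δ))) := by
          have hd3 : (0:ℝ) ≤ (d:ℝ)^3 := by positivity
          apply mul_le_mul_of_nonneg_left _ hd3
          apply mul_le_mul_of_nonneg_right hpow
          positivity
      _ = (d:ℝ)^3 * K4 * ((Real.sqrt h * h ^ (-κ))^3 * h ^ (-δ)) := by ring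
      _ = (d:ℝ)^3 * K4 * h ^ ((3 : ℝ) / 2 - 3 * κ - δ) := by rw [hcalc]
  -- conclude
  have habs := (abs_le.1 hT).1
  rw [hlin, hquad, show (h / 2) * f2 x w w = f2 x v v / 2 from by rw [hq2]; ring]
  linarith
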